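/- There exist an invertible 2 × 2 real matrix T all of whose entries are nonzero and diagonal 2 × 2 real matrices D₁ and D₂ with nonnegative diagonal entries such that no invertible lower triangular 2 × 2 real matrix L makes both L·(T·D₁·Tᵀ)·Lᵀ and L·(T·D₂·Tᵀ)·Lᵀ diagonal. In other words, the family of covariance matrices {T·D·Tᵀ : D diagonal PSD} produced by a dense constant mixing matrix T cannot in general be simultaneously diagonalised by congruence with a single constant, invertible, lower triangular matrix. -/

import Mathlib

open Matrix

/-- A dense constant mixing matrix `T` produces a family of covariances
`T D Tᵀ` (`D` diagonal PSD) that cannot in general be simultaneously diagonalised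
by congruence with a single constant, invertible, lower triangular matrix. -/
theorem dense_mixing_not_simultaneously_triangularly_diagonalisable :
    ∃ (T D₁ D₂ : Matrix (Fin 2) (Fin 2) ℝ),
      IsUnit T ∧ (∀ i j : Fin 2, T i j ≠ 0) ∧
      D₁.IsDiag ∧ D₂.IsDiag ∧ (∀ i : Fin 2, 0 ≤ D₁ i i) ∧ (∀ i : Fin 2, 0 ≤ D₂ i i) ∧
      ∀ L : Matrix (Fin 2) (Fin 2) ℝ, IsUnit L → L 0 1 = 0 →
        ¬((L * (T * D₁ * Tᵀ) * Lᵀ).IsDiag ∧ (L * (T * D₂ * Tᵀ) * Lᵀ).IsDiag) := by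
  refine ⟨!![1, 1; 1, -1], !![1, 0; 0, 0], !![0, 0; 0, 1], ?_, ?_, ?_, ?_, ?_, ?_, ?_⟩
  · rw [Matrix.isUnit_iff_isUnit_det]
    simp [Matrix.det_fin_two_of]
    norm_num
  · intro i j; fin_cases i <;> fin_cases j <;> norm_num
  · intro i j hij; fin_cases i <;> fin_cases j <;> simp_all
  · intro i j hij; fin_cases i <;> fin_cases j <;> simp_all
  · intro i; fin_cases i <;> norm_num
  · intro i; fin_cases i <;> norm_num
  · intro L hL h01 ⟨h1, h2⟩
    have hdet : L.det ≠ 0 := by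
      intro h
      have := hL.map (Matrix.detMonoidHom (n := Fin 2) (R := ℝ))
      simp [Matrix.detMonoidHom, h] at this
    rw [Matrix.det_fin_two, h01] at hdet
    have e1 := h1 (show (0:Fin 2) ≠ 1 by decide)
    have e2 := h2 (show (0:Fin 2) ≠ 1 by decide)
    simp [Matrix.mul_apply, Fin.sum_univ_two, Matrix.transpose_apply, h01, Matrix.vecHead, Matrix.vecTail, Matrix.cons_val_zero, Matrix.cons_val_one, Matrix.vecMul, dotProduct] at e1 e2
    apply hdet; nlinarith [e1, e2]
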